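/- The operator H_{φ,ψ}^α is symmetric with respect to the inner product ⟨f,g⟩_S := ⟨S_ψ f, g⟩: for all f, g ∈ D(H_{φ,ψ}^α), ⟨S_ψ H_{φ,ψ}^α f, g⟩ = ⟨S_ψ f, H_{φ,ψ}^α g⟩, provided the sequence α is real. -/

import Mathlib

noncomputable section

open ContinuousLinearMap

local notation "⟪" x ", " y "⟫" => @inner ℂ _ _ x y

theorem quasi_hermitian_symmetry
    {H : Type*} [NormedAddCommGroup H] [InnerProductSpace ℂ H] [CompleteSpace H]
    (e : HilbertBasis ℕ ℂ H) (T : H ≃L[ℂ] H) (φ ψ : ℕ → H)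
    (hφ : ∀ n, φ n = T (e n))
    (hψ : ∀ n, ψ n = adjoint (T.symm : H →L[ℂ] H) (e n)) (α : ℕ → ℝ)
    (Sψ : H →L[ℂ] H) (hSψ : ∀ f, HasSum (fun n => ⟪ψ n, f⟫ • ψ n) (Sψ f)) :
    ∀ f g Hf Hg : H,
      HasSum (fun n => ((α n : ℂ) * ⟪ψ n, f⟫) • φ n) Hf →
      HasSum (fun n => ((α n : ℂ) * ⟪ψ n, g⟫) • φ n) Hg →
      ⟪g, Sψ Hf⟫ = ⟪Hg, Sψ f⟫ := by
  intro f g Hf Hg hf hg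
  -- biorthogonality
  have hbi : ∀ n m, ⟪ψ n, φ m⟫ = if m = n then 1 else 0 := by
    intro n m
    rw [hψ n, hφ m, adjoint_inner_left]
    simp only [ContinuousLinearEquiv.coe_coe, T.symm_apply_apply]
    rw [← e.repr_apply_apply, e.repr_self]
    simp [lp.single_apply, eq_comm]
    simp [Pi.single_apply]
  -- key: ⟪ψ n, Hf⟫ = α n * ⟪ψ n, f⟫ whenever Hf is such a sum
  have key : ∀ (x X : H), HasSum (fun n => ((α n : ℂ) * ⟪ψ n, x⟫) • φ n) X →
      ∀ n, ⟪ψ n, X⟫ = (α n : ℂ) * ⟪ψ n, x⟫ := by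
    intro x X hx n
    have h1 : HasSum (fun m => ((α m : ℂ) * ⟪ψ m, x⟫) * ⟪ψ n, φ m⟫) ⟪ψ n, X⟫ := by
      simpa [inner_smul_right] using
        (hx.mapL (innerSL ℂ (ψ n)))
    have h2 : HasSum (fun m => ((α m : ℂ) * ⟪ψ m, x⟫) * ⟪ψ n, φ m⟫)
        ((α n : ℂ) * ⟪ψ n, x⟫) := by
      have := hasSum_ite_eq n ((α n : ℂ) * ⟪ψ n, x⟫)
      refine this.congr_fun fun m => ?_
      rw [hbi n m]
      by_cases h : m = n <;> simp [h]
    exact h1.unique h2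
  have hfn := key f Hf hf
  have hgn := key g Hg hg
  -- expand both sides via Sψ
  have hL : HasSum (fun n => ⟪ψ n, Hf⟫ * ⟪g, ψ n⟫) ⟪g, Sψ Hf⟫ := by
    simpa [inner_smul_right] using ((hSψ Hf).mapL (innerSL ℂ g))
  have hR : HasSum (fun n => ⟪ψ n, f⟫ * ⟪Hg, ψ n⟫) ⟪Hg, Sψ f⟫ := by
    simpa [inner_smul_right] using ((hSψ f).mapL (innerSL ℂ Hg))
  refine hL.unique (hR.congr_fun fun n => ?_)
  have h3 : ⟪Hg, ψ n⟫ = (α n : ℂ) * ⟪g, ψ n⟫ := by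
    rw [← inner_conj_symm, hgn n, map_mul, Complex.conj_ofReal, inner_conj_symm]
  rw [hfn n, h3]
  ring
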